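/- If S and T are semigroups each admitting a left fairly invariant finitely-additive probability measure, then the direct product semigroup S × T also admits a left fairly invariant finitely-additive probability measure. -/

import Mathlib

open Set

/-- A finitely-additive probability measure on a type `S`. -/
def IsFAProb {S : Type*} (μ : Set S → ℝ) : Prop :=
  μ Set.univ = 1 ∧ (∀ A, 0 ≤ μ A) ∧
    ∀ A B : Set S, Disjoint A B → μ (A ∪ B) = μ A + μ B

/-- `μ` is left fairly invariant: `μ (s A) = μ A` whenever left
multiplication by `s` is injective on `A`. -/
def LeftFairlyInv {S : Type*} [Mul S] (μ : Set S → ℝ) : Prop :=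
  ∀ (s : S) (A : Set S), Set.InjOn (fun x => s * x) A →
    μ ((fun x => s * x) '' A) = μ A

/-- `μ` is right fairly invariant. -/
def RightFairlyInv {S : Type*} [Mul S] (μ : Set S → ℝ) : Prop :=
  ∀ (s : S) (A : Set S), Set.InjOn (fun x => x * s) A →
    μ ((fun x => x * s) '' A) = μ A

section Helpers
variable {S : Type*}

theorem faprob_empty {μ : Set S → ℝ} (h : IsFAProb μ) : μ ∅ = 0 := by
  have := h.2.2 ∅ ∅ disjoint_bot_left
  simp only [Set.union_empty] at this; linarith

theorem faprob_mono {μ : Set S → ℝ} (h : IsFAProb μ) {A B : Set S} (hAB : A ⊆ B) :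
    μ A ≤ μ B := by
  have hd : Disjoint A (B \ A) := disjoint_sdiff_right
  have h2 := h.2.2 _ _ hd
  rw [Set.union_diff_cancel hAB] at h2
  have := h.2.1 (B \ A); linarith

theorem faprob_le_one {μ : Set S → ℝ} (h : IsFAProb μ) (A : Set S) : μ A ≤ 1 :=
  h.1 ▸ faprob_mono h (subset_univ A)

theorem faprob_finadd {μ : Set S → ℝ} (h : IsFAProb μ) {ι : Type*} (F : Finset ι)
    (B : ι → Set S) (hd : ∀ i ∈ F, ∀ j ∈ F, i ≠ j → Disjoint (B i) (B j)) :
    μ (⋃ i ∈ F, B i) = ∑ i ∈ F, μ (B i) := by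
  classical
  induction F using Finset.induction with
  | empty => simpa using faprob_empty h
  | @insert a s ha ih =>
    rw [Finset.set_biUnion_insert, Finset.sum_insert ha]
    have hdisj : Disjoint (B a) (⋃ i ∈ s, B i) := by
      rw [Set.disjoint_iUnion₂_right]
      intro i hi
      exact hd a (Finset.mem_insert_self a s) i (Finset.mem_insert_of_mem hi)
        (fun hai => ha (hai ▸ hi))
    rw [h.2.2 _ _ hdisj, ih (fun i hi j hj hij =>
      hd i (Finset.mem_insert_of_mem hi) j (Finset.mem_insert_of_mem hj) hij)]

theorem faprob_union_le {μ : Set S → ℝ} (h : IsFAProb μ) (A B : Set S) :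
    μ (A ∪ B) ≤ μ A + μ B := by
  have hd : Disjoint A (B \ A) := disjoint_sdiff_right
  have h2 := h.2.2 _ _ hd
  rw [Set.union_diff_self] at h2
  have := faprob_mono h (diff_subset : B \ A ⊆ B); linarith

theorem faprob_subadd {μ : Set S → ℝ} (h : IsFAProb μ) {ι : Type*} (F : Finset ι)
    (B : ι → Set S) : μ (⋃ i ∈ F, B i) ≤ ∑ i ∈ F, μ (B i) := by
  classical
  induction F using Finset.induction with
  | empty => simpa using le_of_eq (faprob_empty h)
  | @insert a s ha ih =>
    rw [Finset.set_biUnion_insert, Finset.sum_insert ha]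
    exact (faprob_union_le h _ _).trans (by linarith)

open Classical in
noncomputable def chi (E : Set S) (x : S) : ℝ := if x ∈ E then 1 else 0

theorem chi_nonneg (E : Set S) (x : S) : 0 ≤ chi E x := by
  unfold chi; split <;> norm_num

theorem chi_le_one (E : Set S) (x : S) : chi E x ≤ 1 := by
  unfold chi; split <;> norm_num

theorem chi_of_mem {E : Set S} {x : S} (hx : x ∈ E) : chi E x = 1 := by
  unfold chi; split <;> tauto

theorem chi_of_not_mem {E : Set S} {x : S} (hx : x ∉ E) : chi E x = 0 := by
  unfold chi; split <;> tauto

theorem chi_mono {E F : Set S} {x : S} (h : x ∈ E → x ∈ F) : chi E x ≤ chi F x := by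
  unfold chi; split
  · rw [if_pos (h (by assumption))]
  · split <;> norm_num

/-- Core comparison lemma: if a signed combination of indicators is pointwise `≤ K`,
then the corresponding combination of measures is `≤ K`. -/
theorem core' {μ : Set S → ℝ} (h : IsFAProb μ) (N : ℕ) (u : ℕ → ℝ) (U : ℕ → Set S) (K : ℝ)
    (hpt : ∀ x : S, ∑ i ∈ Finset.range N, u i * chi (U i) x ≤ K) :
    ∑ i ∈ Finset.range N, u i * μ (U i) ≤ K := by
  classical
  set pw := (Finset.range N).powerset with hpw
  set atom : Finset ℕ → Set S := fun P => {x | ∀ i ∈ Finset.range N, (x ∈ U i ↔ i ∈ P)}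
    with hatom
  set pat : S → Finset ℕ := fun x => (Finset.range N).filter (fun i => x ∈ U i) with hpatdef
  have hpat_mem : ∀ x, pat x ∈ pw := fun x => Finset.mem_powerset.2 (Finset.filter_subset _ _)
  have hx_atom : ∀ x, x ∈ atom (pat x) := by
    intro x i hi; simp [hpatdef, hi]
  have hpat_eq : ∀ (x : S) (P : Finset ℕ), P ∈ pw → x ∈ atom P → P = pat x := by
    intro x P hP hxP
    apply Finset.ext
    intro i
    constructor
    · intro hiP
      have hiN : i ∈ Finset.range N := Finset.mem_powerset.1 hP hiP
      simp only [hpatdef, Finset.mem_filter]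
      exact ⟨hiN, (hxP i hiN).2 hiP⟩
    · intro hip
      simp only [hpatdef, Finset.mem_filter] at hip
      exact (hxP i hip.1).1 hip.2
  have hdisj : ∀ P ∈ pw, ∀ Q ∈ pw, P ≠ Q → Disjoint (atom P) (atom Q) := by
    intro P hP Q hQ hPQ
    rw [Set.disjoint_left]
    intro x hxP hxQ
    exact hPQ ((hpat_eq x P hP hxP).trans (hpat_eq x Q hQ hxQ).symm)
  have hcover : (⋃ P ∈ pw, atom P) = univ := by
    apply Set.eq_univ_of_forall
    intro x
    exact Set.mem_biUnion (hpat_mem x) (hx_atom x)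
  have hsum_atom : ∑ P ∈ pw, μ (atom P) = 1 := by
    rw [← faprob_finadd h pw atom hdisj, hcover, h.1]
  have hU : ∀ i ∈ Finset.range N, μ (U i) = ∑ P ∈ pw, (if i ∈ P then μ (atom P) else 0) := by
    intro i hi
    have hUi : U i = ⋃ P ∈ pw.filter (fun P => i ∈ P), atom P := by
      ext x
      constructor
      · intro hx
        refine Set.mem_biUnion (Finset.mem_filter.2 ⟨hpat_mem x, ?_⟩) (hx_atom x)
        simp only [hpatdef, Finset.mem_filter]
        exact ⟨hi, hx⟩
      · intro hx
        simp only [Set.mem_iUnion] at hx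
        obtain ⟨P, hP, hxP⟩ := hx
        simp only [Finset.mem_filter] at hP
        exact (hxP i hi).2 hP.2
    rw [hUi, faprob_finadd h _ _ (fun P hP Q hQ hPQ =>
      hdisj P (Finset.mem_of_mem_filter P hP) Q (Finset.mem_of_mem_filter Q hQ) hPQ),
      Finset.sum_filter]
  calc ∑ i ∈ Finset.range N, u i * μ (U i)
      = ∑ i ∈ Finset.range N, ∑ P ∈ pw, (if i ∈ P then u i * μ (atom P) else 0) := by
        refine Finset.sum_congr rfl fun i hi => ?_
        rw [hU i hi, Finset.mul_sum]
        exact Finset.sum_congr rfl fun P _ => by rw [mul_ite, mul_zero]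
    _ = ∑ P ∈ pw, ∑ i ∈ Finset.range N, (if i ∈ P then u i * μ (atom P) else 0) :=
        Finset.sum_comm
    _ = ∑ P ∈ pw, (∑ i ∈ P, u i) * μ (atom P) := by
        refine Finset.sum_congr rfl fun P hP => ?_
        rw [Finset.sum_ite_mem, Finset.inter_eq_right.2 (Finset.mem_powerset.1 hP),
          ← Finset.sum_mul]
    _ ≤ ∑ P ∈ pw, K * μ (atom P) := by
        refine Finset.sum_le_sum fun P hP => ?_
        rcases Set.eq_empty_or_nonempty (atom P) with he | ⟨x, hx⟩
        · rw [he, faprob_empty h, mul_zero, mul_zero]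
        · refine mul_le_mul_of_nonneg_right ?_ (h.2.1 _)
          have h1 : ∑ i ∈ P, u i = ∑ i ∈ Finset.range N, (if i ∈ P then u i else 0) := by
            rw [Finset.sum_ite_mem, Finset.inter_eq_right.2 (Finset.mem_powerset.1 hP)]
          have h2 : ∀ i ∈ Finset.range N, (if i ∈ P then u i else 0) = u i * chi (U i) x := by
            intro i hi
            rcases em (i ∈ P) with hiP | hiP
            · rw [if_pos hiP, chi_of_mem ((hx i hi).2 hiP), mul_one]
            · rw [if_neg hiP, chi_of_not_mem (fun hxu => hiP ((hx i hi).1 hxu)), mul_zero]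
          rw [h1, Finset.sum_congr rfl h2]; exact hpt x
    _ = K := by rw [← Finset.mul_sum, hsum_atom, mul_one]

theorem core2 {μ : Set S → ℝ} (h : IsFAProb μ) (n m : ℕ) (c : ℕ → ℝ) (E : ℕ → Set S)
    (d : ℕ → ℝ) (D : ℕ → Set S) (K : ℝ)
    (hpt : ∀ x, ∑ i ∈ Finset.range n, c i * chi (E i) x
      ≤ K + ∑ j ∈ Finset.range m, d j * chi (D j) x) :
    ∑ i ∈ Finset.range n, c i * μ (E i) ≤ K + ∑ j ∈ Finset.range m, d j * μ (D j) := by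
  classical
  set u : ℕ → ℝ := fun i => if i < n then c i else -(d (i - n)) with hu
  set U : ℕ → Set S := fun i => if i < n then E i else D (i - n) with hU
  have hsplit : ∀ (w : Set S → ℝ),
      ∑ i ∈ Finset.range (n + m), u i * w (U i)
        = ∑ i ∈ Finset.range n, c i * w (E i)
          - ∑ j ∈ Finset.range m, d j * w (D j) := by
    intro w
    rw [Finset.sum_range_add, sub_eq_add_neg, ← Finset.sum_neg_distrib]
    congr 1
    · exact Finset.sum_congr rfl fun i hi => by
        have : i < n := Finset.mem_range.1 hi
        simp [hu, hU, this]
    · exact Finset.sum_congr rfl fun j hj => by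
        have h1 : ¬ (n + j < n) := by omega
        simp [hu, hU, h1]
  have key := core' h (n + m) u U K (fun x => by
    rw [hsplit (fun E => chi E x)]
    have := hpt x
    linarith)
  rw [hsplit μ] at key
  linarith

end Helpers

section PInt
variable {S : Type*}

theorem le_of_forall_le_add_div {a b c : ℝ} (hc : 0 ≤ c)
    (h : ∀ n : ℕ, 0 < n → a ≤ b + c / n) : a ≤ b := by
  refine le_of_forall_pos_le_add fun ε hε => ?_
  obtain ⟨n, hn⟩ := exists_nat_gt (c / ε)
  have hn0 : 0 < n := by
    by_contra hn0
    interval_cases n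
    · simp at hn; nlinarith [div_nonneg hc hε.le]
  refine (h n hn0).trans ?_
  have hnR : (0:ℝ) < n := by exact_mod_cast hn0
  have : c / n ≤ ε := by
    rw [div_le_iff₀ hnR]
    rw [div_lt_iff₀ hε] at hn
    nlinarith
  linarith

def mset (μS : Set S → ℝ) (f : S → ℝ) : Set ℝ :=
  {r | ∃ n : ℕ, ∃ c : ℕ → ℝ, ∃ E : ℕ → Set S,
    (∀ i ∈ Finset.range n, 0 ≤ c i) ∧
    (∀ x, ∑ i ∈ Finset.range n, c i * chi (E i) x ≤ f x) ∧
    r = ∑ i ∈ Finset.range n, c i * μS (E i)}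

noncomputable def pint (μS : Set S → ℝ) (f : S → ℝ) : ℝ := sSup (mset μS f)

theorem zero_mem_mset {μS : Set S → ℝ} {f : S → ℝ} (hf : ∀ x, 0 ≤ f x) :
    (0:ℝ) ∈ mset μS f :=
  ⟨0, fun _ => 0, fun _ => ∅, by simp, fun x => by simpa using hf x, by simp⟩

theorem mset_bddAbove {μS : Set S → ℝ} (h : IsFAProb μS) {f : S → ℝ} (hf1 : ∀ x, f x ≤ 1) :
    BddAbove (mset μS f) := by
  refine ⟨1, fun r hr => ?_⟩
  obtain ⟨n, c, E, hc, hpt, rfl⟩ := hr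
  exact core' h n c E 1 (fun x => (hpt x).trans (hf1 x))

theorem le_pint {μS : Set S → ℝ} (h : IsFAProb μS) {f : S → ℝ} (hf1 : ∀ x, f x ≤ 1)
    {r : ℝ} (hr : r ∈ mset μS f) : r ≤ pint μS f :=
  le_csSup (mset_bddAbove h hf1) hr

theorem pint_le {μS : Set S → ℝ} {f : S → ℝ} (hf0 : ∀ x, 0 ≤ f x) {c : ℝ}
    (hub : ∀ r ∈ mset μS f, r ≤ c) : pint μS f ≤ c :=
  csSup_le ⟨0, zero_mem_mset hf0⟩ hub

theorem pint_nonneg {μS : Set S → ℝ} (h : IsFAProb μS) {f : S → ℝ} (hf0 : ∀ x, 0 ≤ f x)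
    (hf1 : ∀ x, f x ≤ 1) : 0 ≤ pint μS f :=
  le_pint h hf1 (zero_mem_mset hf0)

/-- level sets -/
def Lv (f : S → ℝ) (n j : ℕ) : Set S := {s | ((j:ℝ)+1)/(n:ℝ) ≤ f s}

theorem count_level {n : ℕ} (hn : 0 < n) {t : ℝ} (h0 : 0 ≤ t) (h1 : t ≤ 1) :
    ((((Finset.range n).filter (fun j : ℕ => ((j:ℝ)+1)/(n:ℝ) ≤ t)).card : ℝ)) ≤ n * t ∧
    n * t ≤ ((((Finset.range n).filter (fun j : ℕ => ((j:ℝ)+1)/(n:ℝ) ≤ t)).card : ℝ)) + 1 := by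
  classical
  have hnR : (0:ℝ) < n := by exact_mod_cast hn
  have hnt : 0 ≤ (n:ℝ) * t := by positivity
  set m := ⌊(n:ℝ)*t⌋₊ with hm
  have hcond : ∀ j : ℕ, (((j:ℝ)+1)/(n:ℝ) ≤ t ↔ j < m) := by
    intro j
    rw [div_le_iff₀ hnR, hm]
    constructor
    · intro hle
      have : ((j+1 : ℕ) : ℝ) ≤ (n:ℝ) * t := by push_cast; linarith
      exact Nat.lt_of_lt_of_le (Nat.lt_succ_self j) ((Nat.le_floor_iff hnt).2 this)
    · intro hlt
      have h2 : ((j+1 : ℕ) : ℝ) ≤ ((m : ℕ) : ℝ) := by exact_mod_cast hlt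
      have h3 : ((m : ℕ) : ℝ) ≤ (n:ℝ)*t := Nat.floor_le hnt
      push_cast at h2; linarith
  have hfil : (Finset.range n).filter (fun j : ℕ => ((j:ℝ)+1)/(n:ℝ) ≤ t)
      = Finset.range (min m n) := by
    ext j
    simp only [Finset.mem_filter, Finset.mem_range, hcond j, Nat.lt_min]
    tauto
  have hmn : m ≤ n := by
    have : (n:ℝ) * t ≤ (n:ℝ) := by nlinarith
    calc m ≤ ⌊(n:ℝ)⌋₊ := Nat.floor_le_floor this
      _ = n := Nat.floor_natCast n
  rw [hfil, Finset.card_range, min_eq_left hmn]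
  constructor
  · exact Nat.floor_le hnt
  · have := Nat.lt_floor_add_one ((n:ℝ)*t)
    push_cast at this ⊢; linarith

theorem level_le {f : S → ℝ} {n : ℕ} (hn : 0 < n) {x : S} (hf0 : 0 ≤ f x) (hf1 : f x ≤ 1) :
    ∑ j ∈ Finset.range n, (1/(n:ℝ)) * chi (Lv f n j) x ≤ f x := by
  classical
  have hnR : (0:ℝ) < n := by exact_mod_cast hn
  have hc : ∀ j ∈ Finset.range n, (1/(n:ℝ)) * chi (Lv f n j) x
      = (1/(n:ℝ)) * (if ((j:ℝ)+1)/(n:ℝ) ≤ f x then 1 else 0) := by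
    intro j _
    congr 1
  rw [Finset.sum_congr rfl hc, ← Finset.mul_sum, Finset.sum_boole]
  have := (count_level hn hf0 hf1).1
  rw [div_mul_eq_mul_div, one_mul, div_le_iff₀ hnR]
  linarith

theorem level_ge {f : S → ℝ} {n : ℕ} (hn : 0 < n) {x : S} (hf0 : 0 ≤ f x) (hf1 : f x ≤ 1) :
    f x ≤ 1/(n:ℝ) + ∑ j ∈ Finset.range n, (1/(n:ℝ)) * chi (Lv f n j) x := by
  classical
  have hnR : (0:ℝ) < n := by exact_mod_cast hn
  have hc : ∀ j ∈ Finset.range n, (1/(n:ℝ)) * chi (Lv f n j) x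
      = (1/(n:ℝ)) * (if ((j:ℝ)+1)/(n:ℝ) ≤ f x then 1 else 0) := by
    intro j _
    congr 1
  rw [Finset.sum_congr rfl hc, ← Finset.mul_sum, Finset.sum_boole]
  have := (count_level hn hf0 hf1).2
  rw [div_mul_eq_mul_div, one_mul, ← add_div, le_div_iff₀ hnR]
  linarith

theorem level_mem {μS : Set S → ℝ} {f : S → ℝ} (hf0 : ∀ x, 0 ≤ f x) (hf1 : ∀ x, f x ≤ 1)
    {n : ℕ} (hn : 0 < n) :
    (∑ j ∈ Finset.range n, (1/(n:ℝ)) * μS (Lv f n j)) ∈ mset μS f :=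
  ⟨n, fun _ => 1/(n:ℝ), Lv f n, fun i _ => by positivity,
    fun x => level_le hn (hf0 x) (hf1 x), rfl⟩

theorem pint_one {μS : Set S → ℝ} (h : IsFAProb μS) : pint μS (fun _ => 1) = 1 := by
  apply le_antisymm
  · exact pint_le (fun _ => zero_le_one) (fun r hr => by
      obtain ⟨n, c, E, hc, hpt, rfl⟩ := hr
      exact core' h n c E 1 (fun x => hpt x))
  · refine le_pint h (fun _ => le_refl 1) ⟨1, fun _ => 1, fun _ => Set.univ, by simp, ?_, ?_⟩
    · intro x
      simp [chi_of_mem (Set.mem_univ x)]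
    · simp [h.1]

theorem pint_add {μS : Set S → ℝ} (h : IsFAProb μS) {f g : S → ℝ}
    (hf0 : ∀ x, 0 ≤ f x) (hg0 : ∀ x, 0 ≤ g x) (hfg1 : ∀ x, f x + g x ≤ 1) :
    pint μS (fun x => f x + g x) = pint μS f + pint μS g := by
  classical
  have hf1 : ∀ x, f x ≤ 1 := fun x => by have := hg0 x; have := hfg1 x; linarith
  have hg1 : ∀ x, g x ≤ 1 := fun x => by have := hf0 x; have := hfg1 x; linarith
  have hfg0 : ∀ x, 0 ≤ f x + g x := fun x => by have := hf0 x; have := hg0 x; linarith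
  apply le_antisymm
  · -- ≤
    refine pint_le hfg0 (fun r hr => ?_)
    obtain ⟨n₀, c, E, hc, hpt, rfl⟩ := hr
    refine le_of_forall_le_add_div (by norm_num : (0:ℝ) ≤ 2) (fun n hn => ?_)
    have hnR : (0:ℝ) < n := by exact_mod_cast hn
    set D : ℕ → Set S := fun j => if j < n then Lv f n j else Lv g n (j - n) with hD
    have key := core2 h n₀ (n + n) c E (fun _ => 1/(n:ℝ)) D (2/(n:ℝ)) (fun x => by
      have h1 := level_ge hn (hf0 x) (hf1 x)
      have h2 := level_ge hn (hg0 x) (hg1 x)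
      have hsplit : ∑ j ∈ Finset.range (n+n), (1/(n:ℝ)) * chi (D j) x
          = ∑ j ∈ Finset.range n, (1/(n:ℝ)) * chi (Lv f n j) x
            + ∑ j ∈ Finset.range n, (1/(n:ℝ)) * chi (Lv g n j) x := by
        rw [Finset.sum_range_add]
        congr 1
        · exact Finset.sum_congr rfl fun j hj => by
            simp [hD, Finset.mem_range.1 hj]
        · exact Finset.sum_congr rfl fun j hj => by
            have : ¬ (n + j < n) := by omega
            simp [hD, this]
      rw [hsplit]
      have hpx : ∑ i ∈ Finset.range n₀, c i * chi (E i) x ≤ f x + g x := hpt x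
      have h3 : (2:ℝ)/(n:ℝ) = 1/(n:ℝ) + 1/(n:ℝ) := by ring
      linarith)
    have hsplit2 : ∑ j ∈ Finset.range (n+n), (1/(n:ℝ)) * μS (D j)
        = ∑ j ∈ Finset.range n, (1/(n:ℝ)) * μS (Lv f n j)
          + ∑ j ∈ Finset.range n, (1/(n:ℝ)) * μS (Lv g n j) := by
      rw [Finset.sum_range_add]
      congr 1
      · exact Finset.sum_congr rfl fun j hj => by
          simp [hD, Finset.mem_range.1 hj]
      · exact Finset.sum_congr rfl fun j hj => by
          have : ¬ (n + j < n) := by omega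
          simp [hD, this]
    rw [hsplit2] at key
    have hfmem := le_pint h hf1 (level_mem hf0 hf1 hn (μS := μS))
    have hgmem := le_pint h hg1 (level_mem hg0 hg1 hn (μS := μS))
    have h3 : (2:ℝ)/(n:ℝ) = 2/(n:ℝ) := rfl
    linarith
  · -- ≥
    have hstep : ∀ rf ∈ mset μS f, ∀ rg ∈ mset μS g, rf + rg ≤ pint μS (fun x => f x + g x) := by
      rintro rf ⟨n₁, c₁, E₁, hc₁, hpt₁, rfl⟩ rg ⟨n₂, c₂, E₂, hc₂, hpt₂, rfl⟩
      set c : ℕ → ℝ := fun i => if i < n₁ then c₁ i else c₂ (i - n₁) with hcdef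
      set E : ℕ → Set S := fun i => if i < n₁ then E₁ i else E₂ (i - n₁) with hEdef
      have hsplit : ∀ (w : Set S → ℝ),
          ∑ i ∈ Finset.range (n₁+n₂), c i * w (E i)
            = ∑ i ∈ Finset.range n₁, c₁ i * w (E₁ i)
              + ∑ j ∈ Finset.range n₂, c₂ j * w (E₂ j) := by
        intro w
        rw [Finset.sum_range_add]
        congr 1
        · exact Finset.sum_congr rfl fun i hi => by
            simp [hcdef, hEdef, Finset.mem_range.1 hi]
        · exact Finset.sum_congr rfl fun j hj => by
            have : ¬ (n₁ + j < n₁) := by omega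
            simp [hcdef, hEdef, this]
      refine le_pint h (fun x => hfg1 x) ⟨n₁+n₂, c, E, ?_, ?_, (hsplit μS).symm⟩
      · intro i hi
        have hi' := Finset.mem_range.1 hi
        simp only [hcdef]
        split
        · exact hc₁ i (Finset.mem_range.2 (by assumption))
        · exact hc₂ _ (Finset.mem_range.2 (by omega))
      · intro x
        rw [hsplit (fun E => chi E x)]
        exact add_le_add (hpt₁ x) (hpt₂ x)
    have h1 : pint μS f ≤ pint μS (fun x => f x + g x) - pint μS g := by
      refine csSup_le ⟨0, zero_mem_mset hf0⟩ (fun rf hrf => ?_)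
      rw [le_sub_iff_add_le]
      have : pint μS g ≤ pint μS (fun x => f x + g x) - rf := by
        refine csSup_le ⟨0, zero_mem_mset hg0⟩ (fun rg hrg => ?_)
        rw [le_sub_iff_add_le, add_comm]
        exact hstep rf hrf rg hrg
      linarith
    linarith

end PInt

section Fair
variable {S T : Type*} [Semigroup S] [Semigroup T]

theorem count_G {n : ℕ} (hn : 0 < n) {o g : ℝ} (ho : 0 ≤ o) (hg : 0 ≤ g) (hog : o + g ≤ 1) :
    ((((Finset.range n).filter
        (fun j : ℕ => o ≤ (j:ℝ)/(n:ℝ) ∧ ((j:ℝ)+1)/(n:ℝ) ≤ o + g)).card : ℝ)) ≤ n * g ∧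
    n * g - 2 ≤ ((((Finset.range n).filter
        (fun j : ℕ => o ≤ (j:ℝ)/(n:ℝ) ∧ ((j:ℝ)+1)/(n:ℝ) ≤ o + g)).card : ℝ)) := by
  classical
  have hnR : (0:ℝ) < n := by exact_mod_cast hn
  set c₁ := ⌈(n:ℝ)*o⌉₊ with hc₁def
  set c₂ := ⌊(n:ℝ)*(o+g)⌋₊ with hc₂def
  have hno : 0 ≤ (n:ℝ)*o := by positivity
  have hnog : 0 ≤ (n:ℝ)*(o+g) := by positivity
  have hcond : ∀ j:ℕ, (o ≤ (j:ℝ)/(n:ℝ) ∧ ((j:ℝ)+1)/(n:ℝ) ≤ o+g) ↔ (c₁ ≤ j ∧ j < c₂) := by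
    intro j
    rw [le_div_iff₀ hnR, div_le_iff₀ hnR]
    constructor
    · rintro ⟨h1, h2⟩
      constructor
      · rw [hc₁def]
        exact Nat.ceil_le.2 (by linarith)
      · have : ((j+1 : ℕ) : ℝ) ≤ (n:ℝ)*(o+g) := by push_cast; linarith
        have := (Nat.le_floor_iff hnog).2 this
        omega
    · rintro ⟨h1, h2⟩
      have hc1 : (n:ℝ)*o ≤ (c₁:ℝ) := Nat.le_ceil _
      have hj1 : (c₁:ℝ) ≤ (j:ℝ) := by exact_mod_cast h1
      have hj2 : ((j+1:ℕ):ℝ) ≤ (c₂:ℝ) := by exact_mod_cast h2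
      have hc2 : (c₂:ℝ) ≤ (n:ℝ)*(o+g) := Nat.floor_le hnog
      push_cast at hj2
      constructor <;> nlinarith
  have hc₂n : c₂ ≤ n := by
    have h1 : (n:ℝ)*(o+g) ≤ (n:ℝ) := by nlinarith
    calc c₂ ≤ ⌊(n:ℝ)⌋₊ := Nat.floor_le_floor h1
      _ = n := Nat.floor_natCast n
  have hfil : (Finset.range n).filter
      (fun j : ℕ => o ≤ (j:ℝ)/(n:ℝ) ∧ ((j:ℝ)+1)/(n:ℝ) ≤ o + g) = Finset.Ico c₁ c₂ := by
    ext j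
    simp only [Finset.mem_filter, Finset.mem_range, Finset.mem_Ico, hcond j]
    omega
  rw [hfil, Nat.card_Ico]
  have hfl : (c₂:ℝ) ≤ (n:ℝ)*(o+g) := Nat.floor_le hnog
  have hfl2 : (n:ℝ)*(o+g) < (c₂:ℝ) + 1 := Nat.lt_floor_add_one _
  have hcl : (n:ℝ)*o ≤ (c₁:ℝ) := Nat.le_ceil _
  have hcl2 : (c₁:ℝ) < (n:ℝ)*o + 1 := Nat.ceil_lt_add_one hno
  rcases le_or_gt c₁ c₂ with hle | hlt
  · rw [Nat.cast_sub hle]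
    constructor <;> nlinarith
  · rw [Nat.sub_eq_zero_of_le hlt.le]
    have hcast : (c₂:ℝ) + 1 ≤ (c₁:ℝ) := by exact_mod_cast hlt
    norm_num
    constructor
    · positivity
    · nlinarith

theorem Nk_bound {μS : Set S → ℝ} (hS : IsFAProb μS) (hSf : LeftFairlyInv μS)
    (x : S) (R : S → Set S) (hR : ∀ s a, a ∈ R s → x * a = s) (k : ℕ) (hk : 0 < k) :
    μS {s | ∃ F : Finset S, F.card = k ∧ ↑F ⊆ R s} ≤ 1/(k:ℝ) := by
  classical
  have hne : Nonempty S := by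
    by_contra hne
    rw [not_nonempty_iff] at hne
    have : (Set.univ : Set S) = ∅ := Set.univ_eq_empty_iff.2 hne
    have h1 := hS.1
    rw [this, faprob_empty hS] at h1
    norm_num at h1
  set Nk := {s | ∃ F : Finset S, F.card = k ∧ ↑F ⊆ R s} with hNkdef
  have hsel : ∀ s, s ∈ Nk → ∃ v : Fin k → S, Function.Injective v ∧ ∀ i, v i ∈ R s := by
    rintro s ⟨F, hcard, hsub⟩
    have hlen : F.toList.length = k := by rw [Finset.length_toList, hcard]
    refine ⟨fun i => F.toList.get (Fin.cast hlen.symm i), ?_, ?_⟩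
    · exact (List.nodup_iff_injective_get.1 F.nodup_toList).comp (Fin.cast_injective _)
    · intro i
      exact hsub (Finset.mem_toList.1 (List.get_mem F.toList _))
  choose! v hvinj hvmem using hsel
  set P : Fin k → Set S := fun i => (fun s => v s i) '' Nk with hPdef
  have hxv : ∀ s ∈ Nk, ∀ i, x * v s i = s := fun s hs i => hR s _ (hvmem s hs i)
  have himg : ∀ i, (fun a => x * a) '' (P i) = Nk := by
    intro i
    ext s
    constructor
    · rintro ⟨a, ⟨s', hs', rfl⟩, rfl⟩
      show x * v s' i ∈ Nk
      rw [hxv s' hs' i]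
      exact hs'
    · intro hs
      exact ⟨v s i, ⟨s, hs, rfl⟩, hxv s hs i⟩
  have hinj_i : ∀ i, Set.InjOn (fun a => x * a) (P i) := by
    rintro i a ⟨s, hs, rfl⟩ a' ⟨s', hs', rfl⟩ hxa
    simp only at hxa
    rw [hxv s hs i, hxv s' hs' i] at hxa
    rw [hxa]
  have hmeas : ∀ i, μS (P i) = μS Nk := by
    intro i
    rw [← hSf x (P i) (hinj_i i), himg i]
  have hdisj : ∀ i ∈ (Finset.univ : Finset (Fin k)), ∀ i' ∈ Finset.univ, i ≠ i' →
      Disjoint (P i) (P i') := by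
    intro i _ i' _ hii
    rw [Set.disjoint_left]
    rintro a ⟨s, hs, rfl⟩ ⟨s', hs', heq⟩
    have heq' : v s' i' = v s i := heq
    have hss : s' = s := by
      have h2 := congrArg (fun a => x * a) heq'
      simp only [hxv s' hs' i', hxv s hs i] at h2
      exact h2
    subst hss
    exact hii (hvinj s' hs' heq').symm
  have hsum := faprob_finadd hS Finset.univ P hdisj
  have hle1 : μS (⋃ i ∈ (Finset.univ : Finset (Fin k)), P i) ≤ 1 := faprob_le_one hS _
  rw [hsum] at hle1
  have : ∑ i : Fin k, μS (P i) = k * μS Nk := by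
    rw [Finset.sum_congr rfl (fun i _ => hmeas i)]
    simp [mul_comm]
  rw [this] at hle1
  have hkR : (0:ℝ) < k := by exact_mod_cast hk
  rw [le_div_iff₀ hkR]
  linarith [mul_comm (μS Nk) (k:ℝ)]

variable (μT : Set T → ℝ) (x : S) (y : T) (A : Set (S × T))

/-- slice function -/
noncomputable def gsl (a : S) : ℝ := μT {b | (a, b) ∈ A}

/-- image set -/
def Cim : Set (S × T) := (fun p => ((x, y) : S × T) * p) '' A

/-- stacked offset along an auxiliary well-ordering -/
noncomputable def off (a : S) : ℝ :=
  sSup {v : ℝ | ∃ F : Finset S, (∀ a' ∈ F, x * a' = x * a ∧ WellOrderingRel a' a) ∧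
    v = ∑ a' ∈ F, gsl μT A a'}

def Gset (n j : ℕ) : Set S :=
  {a | off μT x A a ≤ (j:ℝ)/(n:ℝ) ∧ ((j:ℝ)+1)/(n:ℝ) ≤ off μT x A a + gsl μT A a}

variable {μT x y A}

theorem gsl_nonneg (hT : IsFAProb μT) (a : S) : 0 ≤ gsl μT A a := hT.2.1 _

theorem gsl_le_one (hT : IsFAProb μT) (a : S) : gsl μT A a ≤ 1 := faprob_le_one hT _

theorem yinj (hinj : Set.InjOn (fun p => ((x, y) : S × T) * p) A) (a : S) :
    Set.InjOn (fun b => y * b) {b | (a, b) ∈ A} := by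
  intro b hb b' hb' hyb
  have hyb' : y * b = y * b' := hyb
  have h1 : ((x, y) : S × T) * (a, b) = ((x, y) : S × T) * (a, b') := by
    rw [Prod.mk_mul_mk, Prod.mk_mul_mk, hyb']
  have h2 : ((a, b) : S × T) = (a, b') := hinj hb hb' h1
  exact congrArg Prod.snd h2

theorem gsl_y (hTf : LeftFairlyInv μT)
    (hinj : Set.InjOn (fun p => ((x, y) : S × T) * p) A) (a : S) :
    μT ((fun b => y * b) '' {b | (a, b) ∈ A}) = gsl μT A a :=
  hTf y _ (yinj hinj a)

theorem yim_disj (hinj : Set.InjOn (fun p => ((x, y) : S × T) * p) A)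
    {a a' : S} (hxa : x * a = x * a') (hne : a ≠ a') :
    Disjoint ((fun b => y * b) '' {b | (a, b) ∈ A}) ((fun b => y * b) '' {b | (a', b) ∈ A}) := by
  rw [Set.disjoint_left]
  rintro t ⟨b, hb, rfl⟩ ⟨b', hb', heq⟩
  have heq' : y * b' = y * b := heq
  have h1 : ((x, y) : S × T) * (a', b') = ((x, y) : S × T) * (a, b) := by
    rw [Prod.mk_mul_mk, Prod.mk_mul_mk, heq', hxa]
  exact hne (congrArg Prod.fst (hinj hb' hb h1)).symm

theorem yim_sub {a : S} (s : S) (hxa : x * a = s) :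
    (fun b => y * b) '' {b | (a, b) ∈ A} ⊆ {t | (s, t) ∈ Cim x y A} := by
  rintro t ⟨b, hb, rfl⟩
  exact ⟨(a, b), hb, by simp [Prod.mk_mul_mk, hxa]⟩

theorem sumL1 (hT : IsFAProb μT) (hTf : LeftFairlyInv μT)
    (hinj : Set.InjOn (fun p => ((x, y) : S × T) * p) A)
    (s : S) (F : Finset S) (hF : ∀ a ∈ F, x * a = s) :
    ∑ a ∈ F, gsl μT A a ≤ μT {t | (s, t) ∈ Cim x y A} := by
  classical
  have h1 : ∑ a ∈ F, gsl μT A a = ∑ a ∈ F, μT ((fun b => y * b) '' {b | (a, b) ∈ A}) :=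
    Finset.sum_congr rfl fun a _ => (gsl_y hTf hinj a).symm
  rw [h1, ← faprob_finadd hT F _ (fun a ha a' ha' hne =>
    yim_disj hinj (by rw [hF a ha, hF a' ha']) hne)]
  exact faprob_mono hT (Set.iUnion₂_subset fun a ha => yim_sub (s := s) (hF a ha))

theorem off_bdd (hT : IsFAProb μT) (hTf : LeftFairlyInv μT)
    (hinj : Set.InjOn (fun p => ((x, y) : S × T) * p) A) (a : S) :
    BddAbove {v : ℝ | ∃ F : Finset S, (∀ a' ∈ F, x * a' = x * a ∧ WellOrderingRel a' a) ∧
      v = ∑ a' ∈ F, gsl μT A a'} := by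
  refine ⟨μT {t | (x * a, t) ∈ Cim x y A}, ?_⟩
  rintro v ⟨F, hF, rfl⟩
  exact sumL1 hT hTf hinj (x * a) F (fun a' ha' => (hF a' ha').1)

theorem off_set_nonempty (a : S) :
    Set.Nonempty {v : ℝ | ∃ F : Finset S, (∀ a' ∈ F, x * a' = x * a ∧ WellOrderingRel a' a) ∧
      v = ∑ a' ∈ F, gsl μT A a'} :=
  ⟨0, ∅, by simp, by simp⟩

theorem off_nonneg (hT : IsFAProb μT) (hTf : LeftFairlyInv μT)
    (hinj : Set.InjOn (fun p => ((x, y) : S × T) * p) A) (a : S) : 0 ≤ off μT x A a :=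
  le_csSup (off_bdd hT hTf hinj a) ⟨∅, by simp, by simp⟩

theorem off_add_le (hT : IsFAProb μT) (hTf : LeftFairlyInv μT)
    (hinj : Set.InjOn (fun p => ((x, y) : S × T) * p) A) (a : S) :
    off μT x A a + gsl μT A a ≤ μT {t | (x * a, t) ∈ Cim x y A} := by
  classical
  rw [← le_sub_iff_add_le]
  unfold off
  apply csSup_le (off_set_nonempty a)
  rintro v ⟨F, hF, rfl⟩
  rw [le_sub_iff_add_le, add_comm, ← Finset.sum_insert
    (fun haF => (irrefl_of WellOrderingRel a) (hF a haF).2)]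
  refine sumL1 hT hTf hinj (x * a) _ (fun a' ha' => ?_)
  rcases Finset.mem_insert.1 ha' with rfl | ha'
  · rfl
  · exact (hF a' ha').1

theorem off_mono (hT : IsFAProb μT) (hTf : LeftFairlyInv μT)
    (hinj : Set.InjOn (fun p => ((x, y) : S × T) * p) A)
    {a a' : S} (hxa : x * a' = x * a) (hlt : WellOrderingRel a' a) :
    off μT x A a' + gsl μT A a' ≤ off μT x A a := by
  classical
  rw [← le_sub_iff_add_le]
  conv_lhs => rw [off]
  apply csSup_le (off_set_nonempty a')
  rintro v ⟨F, hF, rfl⟩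
  rw [le_sub_iff_add_le, add_comm, ← Finset.sum_insert
    (fun haF => (irrefl_of WellOrderingRel a') (hF a' haF).2)]
  apply le_csSup (off_bdd hT hTf hinj a)
  refine ⟨insert a' F, fun a'' ha'' => ?_, rfl⟩
  rcases Finset.mem_insert.1 ha'' with rfl | ha''
  · exact ⟨hxa, hlt⟩
  · obtain ⟨h1, h2⟩ := hF a'' ha''
    exact ⟨h1.trans hxa, IsTrans.trans _ _ _ h2 hlt⟩

theorem off_add_le_one (hT : IsFAProb μT) (hTf : LeftFairlyInv μT)
    (hinj : Set.InjOn (fun p => ((x, y) : S × T) * p) A) (a : S) :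
    off μT x A a + gsl μT A a ≤ 1 :=
  (off_add_le hT hTf hinj a).trans (faprob_le_one hT _)

theorem Gset_inj (hT : IsFAProb μT) (hTf : LeftFairlyInv μT)
    (hinj : Set.InjOn (fun p => ((x, y) : S × T) * p) A) {n j : ℕ} (hn : 0 < n) :
    Set.InjOn (fun a => x * a) (Gset μT x A n j) := by
  intro a ha a' ha' hxa
  have hxa' : x * a = x * a' := hxa
  by_contra hne
  have hnR : (0:ℝ) < n := by exact_mod_cast hn
  have hjlt : (j:ℝ)/(n:ℝ) < ((j:ℝ)+1)/(n:ℝ) := by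
    apply div_lt_div_of_pos_right (by linarith) hnR
  rcases trichotomous_of WellOrderingRel a a' with hlt | heq | hgt
  · have hm := off_mono (y := y) hT hTf hinj hxa' hlt
    linarith [ha.2, ha'.1]
  · exact hne heq
  · have hm := off_mono (y := y) hT hTf hinj hxa'.symm hgt
    linarith [ha'.2, ha.1]

end Fair

section Main
set_option linter.unusedSectionVars false
set_option maxHeartbeats 1000000
variable {S T : Type*} [Semigroup S] [Semigroup T]

theorem pint_fair (μS : Set S → ℝ) (μT : Set T → ℝ)
    (hS : IsFAProb μS) (hSf : LeftFairlyInv μS) (hT : IsFAProb μT) (hTf : LeftFairlyInv μT)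
    (x : S) (y : T) (A : Set (S × T))
    (hinj : Set.InjOn (fun p => ((x, y) : S × T) * p) A) :
    pint μS (fun s => μT {t | (s, t) ∈ Cim x y A}) = pint μS (gsl μT A) := by
  classical
  set h : S → ℝ := fun s => μT {t | (s, t) ∈ Cim x y A} with hhdef
  have hg0 : ∀ a, 0 ≤ gsl μT A a := gsl_nonneg hT
  have hg1 : ∀ a, gsl μT A a ≤ 1 := gsl_le_one hT
  have hh0 : ∀ s, 0 ≤ h s := fun s => hT.2.1 _
  have hh1 : ∀ s, h s ≤ 1 := fun s => faprob_le_one hT _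
  have hGsum : ∀ (n : ℕ) (a : S), ∑ j ∈ Finset.range n, (1/(n:ℝ)) * chi (Gset μT x A n j) a
      = (1/(n:ℝ)) * (((Finset.range n).filter (fun j : ℕ =>
          off μT x A a ≤ (j:ℝ)/(n:ℝ) ∧ ((j:ℝ)+1)/(n:ℝ) ≤ off μT x A a + gsl μT A a)).card : ℝ) := by
    intro n a
    rw [← Finset.sum_boole, Finset.mul_sum]
    refine Finset.sum_congr rfl fun j _ => ?_
    by_cases hj : off μT x A a ≤ (j:ℝ)/(n:ℝ) ∧ ((j:ℝ)+1)/(n:ℝ) ≤ off μT x A a + gsl μT A a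
    · rw [if_pos hj, chi_of_mem (show a ∈ Gset μT x A n j from hj)]
    · rw [if_neg hj, chi_of_not_mem (show a ∉ Gset μT x A n j from hj)]
  have hGA_le : ∀ (n : ℕ), 0 < n → ∀ a,
      ∑ j ∈ Finset.range n, (1/(n:ℝ)) * chi (Gset μT x A n j) a ≤ gsl μT A a := by
    intro n hn a
    have hnR : (0:ℝ) < n := by exact_mod_cast hn
    rw [hGsum n a]
    have hcg := (count_G hn (off_nonneg hT hTf hinj a) (hg0 a) (off_add_le_one hT hTf hinj a)).1
    rw [div_mul_eq_mul_div, one_mul, div_le_iff₀ hnR]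
    linarith
  have hGA_ge : ∀ (n : ℕ), 0 < n → ∀ a,
      gsl μT A a - 2/(n:ℝ) ≤ ∑ j ∈ Finset.range n, (1/(n:ℝ)) * chi (Gset μT x A n j) a := by
    intro n hn a
    have hnR : (0:ℝ) < n := by exact_mod_cast hn
    rw [hGsum n a]
    have hcg := (count_G hn (off_nonneg hT hTf hinj a) (hg0 a) (off_add_le_one hT hTf hinj a)).2
    rw [div_mul_eq_mul_div, one_mul, le_div_iff₀ hnR]
    have h2 : 2/(n:ℝ) * n = 2 := by field_simp
    nlinarith
  have hGx_le : ∀ (n : ℕ), 0 < n → ∀ s,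
      ∑ j ∈ Finset.range n, (1/(n:ℝ)) * chi ((fun a => x * a) '' Gset μT x A n j) s ≤ h s := by
    intro n hn s
    have hle : ∀ j ∈ Finset.range n, (1/(n:ℝ)) * chi ((fun a => x * a) '' Gset μT x A n j) s
        ≤ (1/(n:ℝ)) * chi (Lv h n j) s := by
      intro j _
      refine mul_le_mul_of_nonneg_left (chi_mono ?_) (by positivity)
      rintro ⟨a, haG, rfl⟩
      show ((j:ℝ)+1)/(n:ℝ) ≤ h (x * a)
      exact le_trans haG.2 (off_add_le hT hTf hinj a)
    exact (Finset.sum_le_sum hle).trans (level_le hn (hh0 s) (hh1 s))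
  have hGmeas : ∀ (n j : ℕ), 0 < n →
      μS ((fun a => x * a) '' Gset μT x A n j) = μS (Gset μT x A n j) :=
    fun n j hn => hSf x _ (Gset_inj hT hTf hinj hn)
  apply le_antisymm
  · -- pint h ≤ pint g
    refine pint_le hh0 (fun r hr => ?_)
    obtain ⟨n₀, c, E, hc, hpt, rfl⟩ := hr
    refine le_of_forall_le_add_div zero_le_one (fun k hk => ?_)
    have hkR : (0:ℝ) < k := by exact_mod_cast hk
    rw [show pint μS (gsl μT A) + 1/(k:ℝ) = (pint μS (gsl μT A) + 1/(k:ℝ)) + 0 by ring]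
    rw [← add_zero (pint μS (gsl μT A) + 1/(k:ℝ))] at *
    refine le_of_forall_le_add_div (by positivity : (0:ℝ) ≤ 2*k) (fun n hn => ?_)
    have hnR : (0:ℝ) < n := by exact_mod_cast hn
    set R : S → Set S := fun s => {a | x * a = s ∧ {b | (a, b) ∈ A}.Nonempty} with hRdef
    set NK : Set S := {s | ∃ F : Finset S, F.card = k ∧ ↑F ⊆ R s} with hNKdef
    set D : ℕ → Set S := fun j => if j < n then (fun a => x * a) '' Gset μT x A n j else NK
      with hDdef
    set d : ℕ → ℝ := fun j => if j < n then 1/(n:ℝ) else 1 with hddef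
    have hDsum : ∀ (w : Set S → ℝ), ∑ j ∈ Finset.range (n+1), d j * w (D j)
        = (∑ j ∈ Finset.range n, (1/(n:ℝ)) * w ((fun a => x * a) '' Gset μT x A n j))
          + w NK := by
      intro w
      rw [Finset.sum_range_succ]
      congr 1
      · refine Finset.sum_congr rfl fun j hj => ?_
        have hjn := Finset.mem_range.1 hj
        simp [hddef, hDdef, hjn]
      · simp [hddef, hDdef]
    have hpoint : ∀ s, h s ≤ 2*(k:ℝ)/(n:ℝ) + ∑ j ∈ Finset.range (n+1), d j * chi (D j) s := by
      intro s
      rw [hDsum (fun E => chi E s)]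
      by_cases hs : s ∈ NK
      · have h1 : chi NK s = 1 := chi_of_mem hs
        have h2 : 0 ≤ ∑ j ∈ Finset.range n, (1/(n:ℝ)) * chi ((fun a => x * a) '' Gset μT x A n j) s :=
          Finset.sum_nonneg fun j _ => mul_nonneg (by positivity) (chi_nonneg _ _)
        have h3 : 0 ≤ 2*(k:ℝ)/(n:ℝ) := by positivity
        rw [h1]
        linarith [hh1 s]
      · have h1 : chi NK s = 0 := chi_of_not_mem hs
        -- R s is finite with at most k elements
        have hfin : (R s).Finite := by
          by_contra hinf
          obtain ⟨F, hsub, hcard⟩ := Set.Infinite.exists_subset_card_eq hinf k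
          exact hs ⟨F, hcard, hsub⟩
        set Fs := hfin.toFinset with hFsdef
        have hFsmem : ∀ a, a ∈ Fs ↔ a ∈ R s := fun a => Set.Finite.mem_toFinset hfin
        have hFscard : Fs.card ≤ k := by
          by_contra hgt
          push_neg at hgt
          obtain ⟨F, hsub, hcard⟩ := Finset.exists_subset_card_eq hgt.le
          exact hs ⟨F, hcard, fun a ha => (hFsmem a).1 (hsub ha)⟩
        -- decompose the slice of the image
        have hCs : {t | (s, t) ∈ Cim x y A} = ⋃ a ∈ Fs, (fun b => y * b) '' {b | (a, b) ∈ A} := by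
          ext t
          simp only [Set.mem_setOf_eq, Set.mem_iUnion]
          constructor
          · rintro ⟨⟨a, b⟩, hab, heq⟩
            have h1 : x * a = s := congrArg Prod.fst heq
            have h2 : y * b = t := congrArg Prod.snd heq
            exact ⟨a, (hFsmem a).2 ⟨h1, ⟨b, hab⟩⟩, ⟨b, hab, h2⟩⟩
          · rintro ⟨a, haFs, b, hb, rfl⟩
            have h1 : x * a = s := ((hFsmem a).1 haFs).1
            refine ⟨(a, b), hb, ?_⟩
            show ((x, y) : S × T) * (a, b) = (s, y * b)
            rw [Prod.mk_mul_mk, h1]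
        have hsub : h s ≤ ∑ a ∈ Fs, gsl μT A a := by
          rw [hhdef]
          simp only []
          rw [hCs]
          refine (faprob_subadd hT Fs _).trans (le_of_eq ?_)
          exact Finset.sum_congr rfl fun a _ => gsl_y hTf hinj a
        have hsum2 : ∑ a ∈ Fs, gsl μT A a
            ≤ 2*(Fs.card:ℝ)/(n:ℝ) + ∑ a ∈ Fs, ∑ j ∈ Finset.range n,
              (1/(n:ℝ)) * chi (Gset μT x A n j) a := by
          have := Finset.sum_le_sum (fun a (_ : a ∈ Fs) =>
            (sub_le_iff_le_add.1 (hGA_ge n hn a)))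
          rw [Finset.sum_add_distrib] at this
          refine this.trans (le_of_eq ?_)
          rw [Finset.sum_const]
          push_cast
          ring_nf
        have hswap : ∑ a ∈ Fs, ∑ j ∈ Finset.range n, (1/(n:ℝ)) * chi (Gset μT x A n j) a
            = ∑ j ∈ Finset.range n, ∑ a ∈ Fs, (1/(n:ℝ)) * chi (Gset μT x A n j) a :=
          Finset.sum_comm
        have hinner : ∀ j ∈ Finset.range n, ∑ a ∈ Fs, (1/(n:ℝ)) * chi (Gset μT x A n j) a
            ≤ (1/(n:ℝ)) * chi ((fun a => x * a) '' Gset μT x A n j) s := by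
          intro j _
          by_cases hex : ∃ a ∈ Fs, a ∈ Gset μT x A n j
          · obtain ⟨a₀, ha₀F, ha₀G⟩ := hex
            have hx₀ : x * a₀ = s := ((hFsmem a₀).1 ha₀F).1
            have himg : chi ((fun a => x * a) '' Gset μT x A n j) s = 1 :=
              chi_of_mem ⟨a₀, ha₀G, hx₀⟩
            rw [himg, mul_one]
            have hcard1 : ∑ a ∈ Fs, chi (Gset μT x A n j) a ≤ 1 := by
              have heqc : ∑ a ∈ Fs, chi (Gset μT x A n j) a
                  = ((Fs.filter (fun a => a ∈ Gset μT x A n j)).card : ℝ) := by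
                rw [← Finset.sum_boole]
                refine Finset.sum_congr rfl fun a _ => ?_
                by_cases hj : a ∈ Gset μT x A n j
                · rw [if_pos hj, chi_of_mem hj]
                · rw [if_neg hj, chi_of_not_mem hj]
              rw [heqc]
              have : (Fs.filter (fun a => a ∈ Gset μT x A n j)).card ≤ 1 := by
                rw [Finset.card_le_one]
                intro a ha a' ha'
                obtain ⟨haF, haG⟩ := Finset.mem_filter.1 ha
                obtain ⟨haF', haG'⟩ := Finset.mem_filter.1 ha'
                refine Gset_inj hT hTf hinj hn haG haG' ?_
                show x * a = x * a'
                rw [((hFsmem a).1 haF).1, ((hFsmem a').1 haF').1]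
              exact_mod_cast this
            calc ∑ a ∈ Fs, (1/(n:ℝ)) * chi (Gset μT x A n j) a
                = (1/(n:ℝ)) * ∑ a ∈ Fs, chi (Gset μT x A n j) a := by rw [Finset.mul_sum]
              _ ≤ (1/(n:ℝ)) * 1 := mul_le_mul_of_nonneg_left hcard1 (by positivity)
              _ = (1/(n:ℝ)) := mul_one _
          · push_neg at hex
            have hz : ∀ a ∈ Fs, (1/(n:ℝ)) * chi (Gset μT x A n j) a = 0 := by
              intro a ha
              rw [chi_of_not_mem (hex a ha), mul_zero]
            rw [Finset.sum_congr rfl hz]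
            simp only [Finset.sum_const_zero]
            exact mul_nonneg (by positivity) (chi_nonneg _ _)
        have hcards : 2*(Fs.card:ℝ)/(n:ℝ) ≤ 2*(k:ℝ)/(n:ℝ) := by
          have hck : (Fs.card : ℝ) ≤ (k:ℝ) := by exact_mod_cast hFscard
          gcongr
        rw [h1, add_zero]
        calc h s ≤ ∑ a ∈ Fs, gsl μT A a := hsub
          _ ≤ 2*(Fs.card:ℝ)/(n:ℝ) + ∑ a ∈ Fs, ∑ j ∈ Finset.range n,
              (1/(n:ℝ)) * chi (Gset μT x A n j) a := hsum2
          _ ≤ 2*(k:ℝ)/(n:ℝ) + ∑ j ∈ Finset.range n, (1/(n:ℝ)) *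
              chi ((fun a => x * a) '' Gset μT x A n j) s := by
            rw [hswap] at *
            exact add_le_add hcards (Finset.sum_le_sum hinner)
    have key := core2 hS n₀ (n+1) c E d D (2*(k:ℝ)/(n:ℝ)) (fun s => (hpt s).trans (hpoint s))
    rw [hDsum μS] at key
    have hNKb : μS NK ≤ 1/(k:ℝ) := Nk_bound hS hSf x R (fun s a ha => ha.1) k hk
    have hGle : ∑ j ∈ Finset.range n, (1/(n:ℝ)) * μS ((fun a => x * a) '' Gset μT x A n j)
        ≤ pint μS (gsl μT A) := by
      have heq : ∑ j ∈ Finset.range n, (1/(n:ℝ)) * μS ((fun a => x * a) '' Gset μT x A n j)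
          = ∑ j ∈ Finset.range n, (1/(n:ℝ)) * μS (Gset μT x A n j) :=
        Finset.sum_congr rfl fun j _ => by rw [hGmeas n j hn]
      rw [heq]
      exact le_pint hS hg1 ⟨n, fun _ => 1/(n:ℝ), Gset μT x A n,
        fun i _ => by positivity, hGA_le n hn, rfl⟩
    have hfrac : 2*(k:ℝ)/(n:ℝ) = (2*(k:ℝ))/(n:ℝ) := by ring
    linarith
  · -- pint g ≤ pint h
    refine pint_le hg0 (fun r hr => ?_)
    obtain ⟨n₀, c, E, hc, hpt, rfl⟩ := hr
    refine le_of_forall_le_add_div (by norm_num : (0:ℝ) ≤ 2) (fun n hn => ?_)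
    have hnR : (0:ℝ) < n := by exact_mod_cast hn
    have key := core2 hS n₀ n c E (fun _ => 1/(n:ℝ)) (Gset μT x A n) (2/(n:ℝ)) (fun a => by
      have h1 := hGA_ge n hn a
      have h2 := hpt a
      have h3 : (fun a => gsl μT A a) a = gsl μT A a := rfl
      simp only [gsl] at h2 ⊢
      linarith [hpt a, hGA_ge n hn a])
    have hmem : (∑ j ∈ Finset.range n, (1/(n:ℝ)) * μS ((fun a => x * a) '' Gset μT x A n j))
        ∈ mset μS h :=
      ⟨n, fun _ => 1/(n:ℝ), fun j => (fun a => x * a) '' Gset μT x A n j,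
        fun i _ => by positivity, hGx_le n hn, rfl⟩
    have hle2 := le_pint hS hh1 hmem
    have heq : ∑ j ∈ Finset.range n, (1/(n:ℝ)) * μS (Gset μT x A n j)
        = ∑ j ∈ Finset.range n, (1/(n:ℝ)) * μS ((fun a => x * a) '' Gset μT x A n j) :=
      Finset.sum_congr rfl fun j _ => by rw [hGmeas n j hn]
    rw [heq] at key
    linarith

end Main

/-- The direct product of two left fairly amenable semigroups is left fairly
amenable. -/
theorem stmt9 (S T : Type*) [Semigroup S] [Semigroup T]
    (hS : ∃ μ : Set S → ℝ, IsFAProb μ ∧ LeftFairlyInv μ)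
    (hT : ∃ μ : Set T → ℝ, IsFAProb μ ∧ LeftFairlyInv μ) :
    ∃ μ : Set (S × T) → ℝ, IsFAProb μ ∧ LeftFairlyInv μ := by
  obtain ⟨μS, hS, hSf⟩ := hS
  obtain ⟨μT, hT, hTf⟩ := hT
  refine ⟨fun A => pint μS (fun s => μT {t | (s, t) ∈ A}), ⟨?_, ?_, ?_⟩, ?_⟩
  · -- μ univ = 1
    have huniv : (fun s : S => μT {t | (s, t) ∈ (Set.univ : Set (S × T))}) = fun _ => 1 := by
      funext s
      have he : {t : T | (s, t) ∈ (Set.univ : Set (S × T))} = Set.univ := by ext t; simp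
      rw [he, hT.1]
    show pint μS (fun s : S => μT {t | (s, t) ∈ (Set.univ : Set (S × T))}) = 1
    rw [huniv, pint_one hS]
  · -- nonneg
    intro A
    exact pint_nonneg hS (fun s => hT.2.1 _) (fun s => faprob_le_one hT _)
  · -- additive
    intro A B hAB
    have hd : ∀ s : S, Disjoint {t : T | (s, t) ∈ A} {t : T | (s, t) ∈ B} := by
      intro s
      rw [Set.disjoint_left] at hAB ⊢
      intro t ht ht'
      exact hAB ht ht'
    have heq : (fun s : S => μT {t | (s, t) ∈ A ∪ B})
        = fun s => μT {t | (s, t) ∈ A} + μT {t | (s, t) ∈ B} := by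
      funext s
      have hslice : {t : T | (s, t) ∈ A ∪ B} = {t | (s, t) ∈ A} ∪ {t | (s, t) ∈ B} := by
        ext t; simp [Set.mem_union]
      rw [hslice, hT.2.2 _ _ (hd s)]
    show pint μS (fun s : S => μT {t | (s, t) ∈ A ∪ B}) = _
    rw [heq]
    exact pint_add hS (fun s => hT.2.1 _) (fun s => hT.2.1 _)
      (fun s => by rw [← hT.2.2 _ _ (hd s)]; exact faprob_le_one hT _)
  · -- fairness
    intro p A hinjp
    obtain ⟨x, y⟩ := p
    exact pint_fair μS μT hS hSf hT hTf x y A hinjp
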